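/- Let G be a profinite set (a compact, Hausdorff, totally disconnected topological space). The contravariant functor from the category of simplicial objects in profinite spaces to sets, sending a simplicial profinite set X to the set of continuous maps from its space X₀ of 0-simplices to G, is representable; i.e. there exists a simplicial profinite set EG together with a natural bijection Hom(X, EG) ≅ C(X₀, G). -/

import Mathlib

open CategoryTheory Opposite

attribute [local instance] CategoryTheory.ConcreteCategory.instFunLike

namespace Stmt5Aux

variable (G : Profinite.{u})

/-- The simplicial profinite set `EG` with `EG_n = G^{n+1}`. -/
def EGdef : SimplicialObject Profinite.{u} where
  obj n := Profinite.of (Fin ((unop n).len + 1) → G)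
  map θ := ConcreteCategory.ofHom (C := Profinite.{u}) ⟨fun g i => g (θ.unop.toOrderHom i), by
    continuity⟩
  map_id n := by apply ConcreteCategory.hom_ext; intro g; funext i; rfl
  map_comp f g := by apply ConcreteCategory.hom_ext; intro x; funext i; rfl

variable {G}

/-- From a continuous map `X₀ → G` to a morphism `X ⟶ EG`. -/
def toHom {X : SimplicialObject Profinite.{u}}
    (f : {f : X.obj (op (SimplexCategory.mk 0)) → G // Continuous f}) :
    X ⟶ EGdef G where
  app n := ConcreteCategory.ofHom (C := Profinite.{u}) ⟨fun x i => f.1 (X.map (SimplexCategory.const (SimplexCategory.mk 0) (unop n) i).op x),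
    by
      apply continuous_pi
      intro i
      exact f.2.comp (ConcreteCategory.hom (X.map (SimplexCategory.const (SimplexCategory.mk 0) (unop n) i).op)).continuous⟩
  naturality := by
    intro n m θ
    ext x
    funext i
    show f.1 (X.map (SimplexCategory.const (SimplexCategory.mk 0) (unop m) i).op (X.map θ x)) =
      f.1 (X.map (SimplexCategory.const (SimplexCategory.mk 0) (unop n) (θ.unop.toOrderHom i)).op x)
    rw [← CategoryTheory.comp_apply, ← X.map_comp]
    congr 1

end Stmt5Aux

/-- For a profinite set `G`, the functor sending a simplicial profinite set
`X` to the set of continuous maps `X₀ → G` is representable by a simplicial profinite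
set `EG`. -/
theorem stmt_5 (G : Profinite.{u}) :
    ∃ (EG : SimplicialObject Profinite.{u})
      (e : ∀ X : SimplicialObject Profinite.{u},
        (X ⟶ EG) ≃
          {f : X.obj (op (SimplexCategory.mk 0)) → G // Continuous f}),
      ∀ (X Y : SimplicialObject Profinite.{u}) (φ : X ⟶ Y) (g : Y ⟶ EG),
        ((e X (φ ≫ g)).1 : X.obj (op (SimplexCategory.mk 0)) → G) =
          fun x => (e Y g).1 (φ.app (op (SimplexCategory.mk 0)) x) := by
  refine ⟨Stmt5Aux.EGdef G, fun X => ⟨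
    fun η => ⟨fun x => η.app (op (SimplexCategory.mk 0)) x 0,
      (continuous_apply 0).comp (ConcreteCategory.hom (η.app (op (SimplexCategory.mk 0)))).continuous⟩,
    fun f => Stmt5Aux.toHom f, ?_, ?_⟩, ?_⟩
  · intro η
    ext n x
    funext i
    show η.app (op (SimplexCategory.mk 0))
      (X.map (SimplexCategory.const (SimplexCategory.mk 0) (unop n) i).op x) 0 = η.app n x i
    have := congrArg (fun h => h x)
      (η.naturality (SimplexCategory.const (SimplexCategory.mk 0) (unop n) i).op)
    simp only [CategoryTheory.comp_apply] at this
    rw [this]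
    rfl
  · intro f
    ext x
    show f.1 (X.map (SimplexCategory.const (SimplexCategory.mk 0) (SimplexCategory.mk 0) 0).op x)
      = f.1 x
    rw [SimplexCategory.const_eq_id, op_id, X.map_id]
    rfl
  · intro X Y φ g
    rfl
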